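/- Let $n > 1$, $\mathfrak{m} = (X_1,\dots,X_n) \subset \Bbbk[X_1,\dots,X_n]$, and $\mathcal{L}_+ = \mathfrak{m}\,\mathrm{Der}(\Bbbk[X_1,\dots,X_n])$. Then for every $s \geq 1$, the span of all brackets $[\,\mathfrak{m}^s \mathcal{L}_+, \mathfrak{m}^s \mathcal{L}_+\,]$ equals $\mathfrak{m}^{2s}\mathcal{L}_+$. -/

import Mathlib

open MvPolynomial

variable (k : Type*) [Field k] [CharZero k] (n : ℕ)

/-- The maximal ideal `𝔪 = (X₁, …, Xₙ)` at the origin. -/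
noncomputable def mIdeal : Ideal (MvPolynomial (Fin n) k) :=
  Ideal.span (Set.range (X : Fin n → MvPolynomial (Fin n) k))

/-- `𝔪^s ℒ₊`: the vector fields (derivations) whose coefficients lie in `𝔪^(s+1)`,
i.e. which vanish to order at least `s + 1` at the origin. -/
noncomputable def mL (s : ℕ) :
    Submodule k (Derivation k (MvPolynomial (Fin n) k) (MvPolynomial (Fin n) k)) where
  carrier := {D | ∀ i, D (X i) ∈ (mIdeal k n) ^ (s + 1)}
  add_mem' := by
    intro a b ha hb i
    simpa using add_mem (ha i) (hb i)
  zero_mem' := by intro i; simp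
  smul_mem' := by
    intro c D hD i
    simpa using Submodule.smul_of_tower_mem _ c (hD i)


set_option linter.unusedSectionVars false

variable {k n}

local notation "R" => MvPolynomial (Fin n) k

lemma mem_mL {s : ℕ} {D : Derivation k R R} :
    D ∈ mL k n s ↔ ∀ i, D (X i) ∈ (mIdeal k n) ^ (s + 1) := Iff.rfl

/-- total degree of an exponent vector -/
def degSum (c : Fin n →₀ ℕ) : ℕ := ∑ l, c l

lemma degSum_add (a b : Fin n →₀ ℕ) : degSum (a + b) = degSum a + degSum b := by
  simp [degSum, Finset.sum_add_distrib]

lemma degSum_single (i : Fin n) (m : ℕ) : degSum (Finsupp.single i m) = m := by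
  simp [degSum, Finsupp.single_apply]

lemma monomial_mem_pow_deg (c : Fin n →₀ ℕ) :
    monomial c (1 : k) ∈ (mIdeal k n) ^ (degSum c) := by
  induction c using Finsupp.induction with
  | zero => simp [degSum]
  | single_add a b f _ _ ih =>
    rw [degSum_add, degSum_single, pow_add]
    have : monomial (Finsupp.single a b + f) (1:k)
        = monomial (Finsupp.single a b) 1 * monomial f 1 := by
      rw [monomial_mul, one_mul]
    rw [this]
    exact Ideal.mul_mem_mul
      (by rw [← X_pow_eq_monomial]
          exact Ideal.pow_mem_pow (Ideal.subset_span (Set.mem_range_self a)) b) ih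

lemma monomial_mem_pow {c : Fin n →₀ ℕ} {m : ℕ} (h : m ≤ degSum c) :
    monomial c (1 : k) ∈ (mIdeal k n) ^ m :=
  Ideal.pow_le_pow_right h (monomial_mem_pow_deg c)
set_option maxHeartbeats 1000000 in
lemma mIdeal_pow_eq (m : ℕ) :
    (mIdeal k n) ^ m
      = Ideal.span ((fun c => monomial c (1:k)) '' {c | m ≤ degSum c}) := by
  apply le_antisymm
  · induction m with
    | zero =>
      intro p _
      have h1 : (1 : R) ∈ Ideal.span ((fun c => monomial c (1:k)) '' {c | 0 ≤ degSum c}) := by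
        apply Ideal.subset_span
        exact ⟨0, by simp, by simp⟩
      simpa using Ideal.mul_mem_left _ p h1
    | succ m ih =>
      rw [pow_succ]
      apply Ideal.mul_le.mpr
      intro x hx y hy
      have hx' := ih hx
      rw [mem_ideal_span_monomial_image] at hx' ⊢
      have hy' : ∀ c ∈ y.support, ∃ c' ≤ c, 1 ≤ degSum c' := by
        intro c hc
        have : y ∈ Ideal.span ((fun c => monomial c (1:k)) '' {c | 1 ≤ degSum c}) := by
          refine Ideal.span_le.mpr ?_ hy
          rintro _ ⟨i, rfl⟩
          apply Ideal.subset_span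
          exact ⟨Finsupp.single i 1, by simp [degSum_single], by simp only []; rw [← pow_one (X i : R), X_pow_eq_monomial]⟩
        rw [mem_ideal_span_monomial_image] at this
        obtain ⟨c', hc1, hc2⟩ := this c hc
        exact ⟨c', hc2, hc1⟩
      intro c hc
      have hsupp := MvPolynomial.support_mul x y hc
      rw [Finset.mem_add] at hsupp
      obtain ⟨c1, hc1, c2, hc2, rfl⟩ := hsupp
      obtain ⟨d1, hd1m, hd1⟩ := hx' c1 hc1
      obtain ⟨d2, hd2, hd2m⟩ := hy' c2 hc2
      refine ⟨d1 + d2, ?_, add_le_add hd1 hd2⟩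
      have h1 : m ≤ degSum d1 := hd1m
      rw [Set.mem_setOf_eq, degSum_add]
      omega
  · rw [Ideal.span_le]
    rintro _ ⟨c, hc, rfl⟩
    exact monomial_mem_pow hc

lemma degSum_mono {a b : Fin n →₀ ℕ} (h : a ≤ b) : degSum a ≤ degSum b :=
  Finset.sum_le_sum fun l _ => (Finsupp.le_def.mp h) l

lemma support_degSum_of_mem_pow {p : R} {m : ℕ} (hp : p ∈ (mIdeal k n) ^ m) :
    ∀ c ∈ p.support, m ≤ degSum c := by
  rw [mIdeal_pow_eq, mem_ideal_span_monomial_image] at hp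
  intro c hc
  obtain ⟨c', hc', hle⟩ := hp c hc
  exact le_trans hc' (degSum_mono hle)

/-- The vector field `X^a ∂ᵢ`. -/
noncomputable def Dv (a : Fin n →₀ ℕ) (i : Fin n) : Derivation k R R :=
  mkDerivation k (Pi.single i (monomial a (1:k)))

lemma Dv_X_same (a : Fin n →₀ ℕ) (i : Fin n) : Dv a i (X i) = monomial a (1:k) := by
  rw [Dv, mkDerivation_X, Pi.single_eq_same]

lemma Dv_X_ne (a : Fin n →₀ ℕ) {i l : Fin n} (h : l ≠ i) :
    Dv a i (X l) = (0 : MvPolynomial (Fin n) k) := by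
  rw [Dv, mkDerivation_X, Pi.single_eq_of_ne h]

lemma Dv_mem {s : ℕ} {a : Fin n →₀ ℕ} (h : s + 1 ≤ degSum a) (i : Fin n) :
    Dv a i ∈ mL k n s := by
  intro l
  rcases eq_or_ne l i with rfl | hne
  · rw [Dv_X_same]; exact monomial_mem_pow h
  · rw [Dv_X_ne _ hne]; exact zero_mem _

lemma Dv_monomial (a b : Fin n →₀ ℕ) (i : Fin n) :
    Dv a i (monomial b (1:k)) = monomial ((b - Finsupp.single i 1) + a) ((b i : k)) := by
  rw [Dv, mkDerivation_monomial, one_smul]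
  rw [Finsupp.sum_eq_single i (fun l _ hl => by rw [Pi.single_eq_of_ne hl, smul_zero])
    (by simp)]
  rw [Pi.single_eq_same, smul_eq_mul, monomial_mul, mul_one]

lemma deriv_mem_pow_succ {s : ℕ} {D : Derivation k R R} (hD : D ∈ mL k n s) (f : R) :
    D f ∈ (mIdeal k n) ^ (s + 1) := by
  induction f using MvPolynomial.induction_on with
  | C a =>
    have : (C a : R) = algebraMap k R a := rfl
    rw [this, Derivation.map_algebraMap]
    exact zero_mem _
  | add p q hp hq => rw [map_add]; exact add_mem hp hq
  | mul_X p i hp =>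
    rw [Derivation.leibniz]
    exact add_mem (Ideal.mul_mem_left _ _ (hD i)) (Ideal.mul_mem_left _ _ hp)

lemma deriv_pow_mem {s : ℕ} {D : Derivation k R R} (hD : D ∈ mL k n s) {m : ℕ} {p : R}
    (hp : p ∈ (mIdeal k n) ^ m) : D p ∈ (mIdeal k n) ^ (m + s) := by
  induction m generalizing p with
  | zero =>
    exact Ideal.pow_le_pow_right (by omega) (deriv_mem_pow_succ hD p)
  | succ m ih =>
    rw [pow_succ] at hp
    refine Submodule.mul_induction_on (C := fun r => D r ∈ (mIdeal k n) ^ (m + 1 + s)) hp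
      (fun x hx y hy => ?_) (fun x y hx hy => by rw [map_add]; exact add_mem hx hy)
    rw [Derivation.leibniz, smul_eq_mul, smul_eq_mul]
    apply add_mem
    · have : x * D y ∈ (mIdeal k n) ^ m * (mIdeal k n) ^ (s+1) :=
        Ideal.mul_mem_mul hx (deriv_mem_pow_succ hD y)
      rw [← pow_add] at this
      exact Ideal.pow_le_pow_right (by omega) this
    · have : y * D x ∈ (mIdeal k n) ^ 1 * (mIdeal k n) ^ (m + s) :=
        Ideal.mul_mem_mul (by rwa [pow_one]) (ih hx)
      rw [← pow_add] at this
      exact Ideal.pow_le_pow_right (by omega) this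

/-- The span of brackets. -/
noncomputable def brkS (s : ℕ) : Submodule k (Derivation k R R) :=
  Submodule.span k
    {z : Derivation k R R | ∃ D ∈ mL k n s, ∃ E ∈ mL k n s, z = ⁅D, E⁆}

lemma brkS_le_mL (s : ℕ) : brkS (k := k) (n := n) s ≤ mL k n (2*s) := by
  rw [brkS, Submodule.span_le]
  rintro z ⟨D, hD, E, hE, rfl⟩
  rw [SetLike.mem_coe, mem_mL]
  intro i
  rw [Derivation.commutator_apply]
  have e1 : (s + 1) + s = 2*s + 1 := by omega
  apply sub_mem
  · have := deriv_pow_mem hD (hE i); rwa [e1] at this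
  · have := deriv_pow_mem hE (hD i); rwa [e1] at this

lemma key_same {s : ℕ} {a b c : Fin n →₀ ℕ} {i : Fin n}
    (hab : a + b = c + Finsupp.single i 1) (ha : s + 1 ≤ degSum a)
    (hb : s + 1 ≤ degSum b) (hne : a i ≠ b i) :
    Dv c i ∈ brkS (k := k) (n := n) s := by
  have habl := fun l => DFunLike.congr_fun hab l
  simp only [Finsupp.add_apply, Finsupp.single_apply] at habl
  have hbr : ⁅(Dv a i : Derivation k R R), Dv b i⁆ = ((b i : k) - (a i : k)) • (Dv c i : Derivation k R R) := by
    apply derivation_ext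
    intro l
    rw [Derivation.commutator_apply, Derivation.smul_apply]
    rcases eq_or_ne l i with rfl | hli
    · rw [Dv_X_same, Dv_X_same, Dv_monomial, Dv_monomial, Dv_X_same]
      have h1 : monomial ((b - Finsupp.single l 1) + a) ((b l : k)) = monomial c ((b l : k)) := by
        rcases Nat.eq_zero_or_pos (b l) with h0 | hpos
        · rw [h0]; simp [monomial_zero]
        · have hidx : (b - Finsupp.single l 1) + a = c := by
            ext t
            have := habl t
            simp only [Finsupp.add_apply, Finsupp.tsub_apply, Finsupp.single_apply]
            rcases eq_or_ne l t with rfl | hlt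
            · simp at this ⊢; omega
            · rw [if_neg hlt] at this ⊢; omega
          rw [hidx]
      have h2 : monomial ((a - Finsupp.single l 1) + b) ((a l : k)) = monomial c ((a l : k)) := by
        rcases Nat.eq_zero_or_pos (a l) with h0 | hpos
        · rw [h0]; simp [monomial_zero]
        · have hidx : (a - Finsupp.single l 1) + b = c := by
            ext t
            have := habl t
            simp only [Finsupp.add_apply, Finsupp.tsub_apply, Finsupp.single_apply]
            rcases eq_or_ne l t with rfl | hlt
            · simp at this ⊢; omega
            · rw [if_neg hlt] at this ⊢; omega
          rw [hidx]
      rw [h1, h2, smul_monomial, smul_eq_mul, mul_one, ← map_sub]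
    · rw [Dv_X_ne _ hli, Dv_X_ne _ hli, map_zero, map_zero, Dv_X_ne _ hli, smul_zero, sub_zero]
  have hcoef : ((b i : k) - (a i : k)) ≠ 0 := by
    rw [sub_ne_zero]
    exact fun h => hne (Nat.cast_injective h.symm)
  have : (Dv c i : Derivation k R R) = ((b i : k) - (a i : k))⁻¹ • ⁅(Dv a i : Derivation k R R), Dv b i⁆ := by
    rw [hbr, inv_smul_smul₀ hcoef]
  rw [this]
  exact Submodule.smul_mem _ _
    (Submodule.subset_span ⟨Dv a i, Dv_mem ha i, Dv b i, Dv_mem hb i, rfl⟩)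

lemma key_mixed {s : ℕ} {v u c : Fin n →₀ ℕ} {i j : Fin n} (hij : j ≠ i)
    (huv : v + u = c + Finsupp.single j 1) (hvi : v i = 0) (huj : u j ≠ 0)
    (hv : s + 1 ≤ degSum v) (hu : s + 1 ≤ degSum u) :
    Dv c i ∈ brkS (k := k) (n := n) s := by
  have huvl := fun l => DFunLike.congr_fun huv l
  simp only [Finsupp.add_apply, Finsupp.single_apply] at huvl
  have hbr : ⁅(Dv v j : Derivation k R R), Dv u i⁆ = (u j : k) • (Dv c i : Derivation k R R) := by
    apply derivation_ext
    intro l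
    rw [Derivation.commutator_apply, Derivation.smul_apply]
    rcases eq_or_ne l i with rfl | hli
    · rw [Dv_X_same, Dv_X_ne _ (Ne.symm hij), map_zero, sub_zero, Dv_monomial, Dv_X_same,
        smul_monomial, smul_eq_mul, mul_one]
      have hidx : (u - Finsupp.single j 1) + v = c := by
        ext t
        have := huvl t
        simp only [Finsupp.add_apply, Finsupp.tsub_apply, Finsupp.single_apply]
        rcases eq_or_ne j t with rfl | hjt
        · simp at this ⊢; omega
        · rw [if_neg hjt] at this ⊢; omega
      rw [hidx]
    · rcases eq_or_ne l j with rfl | hlj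
      · rw [Dv_X_same, Dv_X_ne _ hij, map_zero, zero_sub, Dv_monomial, hvi, Dv_X_ne _ hij,
          smul_zero]
        simp [monomial_zero]
      · rw [Dv_X_ne _ hli, Dv_X_ne _ hlj, map_zero, map_zero, Dv_X_ne _ hli, smul_zero, sub_zero]
  have hcoef : ((u j : k)) ≠ 0 := Nat.cast_ne_zero.mpr huj
  have : (Dv c i : Derivation k R R) = (u j : k)⁻¹ • ⁅(Dv v j : Derivation k R R), Dv u i⁆ := by
    rw [hbr, inv_smul_smul₀ hcoef]
  rw [this]
  exact Submodule.smul_mem _ _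
    (Submodule.subset_span ⟨Dv v j, Dv_mem hv j, Dv u i, Dv_mem hu i, rfl⟩)

lemma key_pure {s : ℕ} (hs : 1 ≤ s) {i j : Fin n} (hij : j ≠ i) :
    Dv (Finsupp.single i (2*s+1)) i ∈ brkS (k := k) (n := n) s := by
  set A : Derivation k R R := Dv (Finsupp.single i (s+1)) j with hA
  set B : Derivation k R R := Dv (Finsupp.single i s + Finsupp.single j 1) i with hB
  have hAmem : A ∈ mL k n s := Dv_mem (by rw [degSum_single]) j
  have hBmem : B ∈ mL k n s := Dv_mem (by rw [degSum_add, degSum_single, degSum_single]) i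
  have hC' : Dv (Finsupp.single i (2*s) + Finsupp.single j 1) j ∈ brkS (k := k) (n := n) s := by
    refine key_mixed (v := Finsupp.single i (s+1)) (u := Finsupp.single i s + Finsupp.single j 1)
      (Ne.symm hij) ?_ ?_ ?_ ?_ ?_
    · ext t
      simp only [Finsupp.add_apply, Finsupp.single_apply]
      by_cases h1 : i = t <;> by_cases h2 : j = t <;> simp_all <;> omega
    · rw [Finsupp.single_eq_of_ne' (Ne.symm hij)]
    · rw [Finsupp.add_apply, Finsupp.single_eq_same, Finsupp.single_eq_of_ne' hij]
      omega
    · rw [degSum_single]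
    · rw [degSum_add, degSum_single, degSum_single]
  have hbr : (Dv (Finsupp.single i (2*s+1)) i : Derivation k R R)
      = ⁅A, B⁆ + ((s : k) + 1) • Dv (Finsupp.single i (2*s) + Finsupp.single j 1) j := by
    apply derivation_ext
    intro l
    rw [Derivation.add_apply, Derivation.commutator_apply, Derivation.smul_apply]
    rcases eq_or_ne l i with rfl | hli
    · rw [Dv_X_same, hA, hB, Dv_X_same, Dv_X_ne _ (Ne.symm hij), map_zero, sub_zero,
        Dv_monomial, Dv_X_ne _ (Ne.symm hij), smul_zero, add_zero]
      have hidx : (Finsupp.single l s + Finsupp.single j 1 - Finsupp.single j 1)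
          + Finsupp.single l (s+1) = Finsupp.single l (2*s+1) := by
        ext t
        simp only [Finsupp.add_apply, Finsupp.tsub_apply, Finsupp.single_apply]
        by_cases h1 : l = t <;> by_cases h2 : j = t <;> simp_all <;> omega
      have hco : (Finsupp.single l s + Finsupp.single j 1 : Fin n →₀ ℕ) j = 1 := by
        rw [Finsupp.add_apply, Finsupp.single_eq_same, Finsupp.single_eq_of_ne' (Ne.symm hij)]
      rw [hidx, hco, Nat.cast_one]
    · rcases eq_or_ne l j with rfl | hlj
      · rw [Dv_X_ne _ hij, hA, hB, Dv_X_same, Dv_X_ne _ hij, map_zero, zero_sub,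
          Dv_monomial, Dv_X_same, smul_monomial, smul_eq_mul, mul_one, Finsupp.single_eq_same]
        have hidx : (Finsupp.single i (s+1) - Finsupp.single i 1)
            + (Finsupp.single i s + Finsupp.single l 1)
            = Finsupp.single i (2*s) + Finsupp.single l 1 := by
          ext t
          simp only [Finsupp.add_apply, Finsupp.tsub_apply, Finsupp.single_apply]
          by_cases h1 : i = t <;> by_cases h2 : l = t <;> simp_all <;> omega
        rw [hidx]
        push_cast
        ring
      · rw [Dv_X_ne _ hli, hA, hB, Dv_X_ne _ hlj, Dv_X_ne _ hli, map_zero, map_zero,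
          Dv_X_ne _ hlj, smul_zero, sub_zero, add_zero]
  rw [hbr]
  exact add_mem (Submodule.subset_span ⟨A, hAmem, B, hBmem, rfl⟩)
    (Submodule.smul_mem _ _ hC')

lemma exists_le_degSum {d : Fin n →₀ ℕ} {m : ℕ} (h : m ≤ degSum d) :
    ∃ v, v ≤ d ∧ degSum v = m := by
  induction m with
  | zero => exact ⟨0, zero_le, by simp [degSum]⟩
  | succ m ih =>
    obtain ⟨v, hvd, hvm⟩ := ih (by omega)
    have hlt : ∃ l, v l < d l := by
      by_contra hco
      push_neg at hco
      have h1 : degSum d ≤ degSum v := Finset.sum_le_sum (fun l _ => hco l)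
      omega
    obtain ⟨l, hl⟩ := hlt
    refine ⟨v + Finsupp.single l 1, ?_, by rw [degSum_add, degSum_single, hvm]⟩
    rw [Finsupp.le_def]
    intro t
    have := Finsupp.le_def.mp hvd t
    rw [Finsupp.add_apply, Finsupp.single_apply]
    by_cases h2 : l = t
    · subst h2; simpa using hl
    · simp [h2, this]

lemma degSum_erase (i : Fin n) (c : Fin n →₀ ℕ) :
    degSum (Finsupp.erase i c) + c i = degSum c := by
  conv_rhs => rw [← Finsupp.single_add_erase i c]
  rw [degSum_add, degSum_single]
  omega

lemma erase_le_self (i : Fin n) (c : Fin n →₀ ℕ) : Finsupp.erase i c ≤ c := by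
  rw [Finsupp.le_def]
  intro t
  rcases eq_or_ne t i with rfl | h
  · rw [Finsupp.erase_same]; exact zero_le
  · rw [Finsupp.erase_ne h]

lemma monomial_Dv_mem {s : ℕ} (hn : 1 < n) (hs : 1 ≤ s) {c : Fin n →₀ ℕ} {i : Fin n}
    (hdc : 2*s + 1 ≤ degSum c) : Dv c i ∈ brkS (k := k) (n := n) s := by
  have : Nontrivial (Fin n) := Fin.nontrivial_iff_two_le.mpr hn
  obtain ⟨j, hij⟩ := exists_ne i
  have hci_le : c i ≤ degSum c := Finset.single_le_sum (f := fun l => c l) (fun _ _ => zero_le)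
    (Finset.mem_univ i)
  by_cases hA : s + 1 ≤ degSum c - c i
  · -- case A: enough mass off the i-th coordinate; use a mixed bracket
    have herase : degSum (Finsupp.erase i c) = degSum c - c i := by
      have := degSum_erase i c; omega
    obtain ⟨v, hvd, hvm⟩ := exists_le_degSum (d := Finsupp.erase i c) (m := s + 1) (by omega)
    have hvc : v ≤ c := le_trans hvd (erase_le_self i c)
    have hvi : v i = 0 := by
      have := Finsupp.le_def.mp hvd i
      rw [Finsupp.erase_same] at this
      omega
    have hvc' : v ≤ c + Finsupp.single j 1 := le_trans hvc le_self_add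
    have huv : v + (c + Finsupp.single j 1 - v) = c + Finsupp.single j 1 :=
      add_tsub_cancel_of_le hvc'
    have hdeq : degSum v + degSum (c + Finsupp.single j 1 - v) = degSum c + 1 := by
      have h5 := congrArg degSum huv
      simp only [degSum_add, degSum_single] at h5
      omega
    refine key_mixed hij huv hvi ?_ (by omega) (by omega)
    · have hvj := Finsupp.le_def.mp hvc j
      rw [Finsupp.tsub_apply, Finsupp.add_apply, Finsupp.single_eq_same]
      omega
  · -- off-i mass is at most s, so c i ≥ s+1
    have hci : s + 1 ≤ c i := by omega
    by_cases hB : c i ≠ 2*s + 1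
    · -- case B : same-direction bracket with a = single i (s+1)
      have hale : Finsupp.single i (s+1) ≤ c + Finsupp.single i 1 := by
        rw [Finsupp.le_def]
        intro t
        simp only [Finsupp.add_apply, Finsupp.single_apply]
        by_cases h2 : i = t
        · subst h2; split_ifs <;> omega
        · simp [h2]
      have hab : Finsupp.single i (s+1) + (c + Finsupp.single i 1 - Finsupp.single i (s+1))
          = c + Finsupp.single i 1 := add_tsub_cancel_of_le hale
      have hdeq : (s+1) + degSum (c + Finsupp.single i 1 - Finsupp.single i (s+1))
          = degSum c + 1 := by
        have h5 := congrArg degSum hab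
        simp only [degSum_add, degSum_single] at h5
        omega
      refine key_same hab (by rw [degSum_single]) (by omega) ?_
      simp only [Finsupp.tsub_apply, Finsupp.add_apply]
      simp only [Finsupp.single_apply, if_pos rfl, if_true]
      omega
    · push_neg at hB
      by_cases hC : ∃ l, l ≠ i ∧ c l ≠ 0
      · -- case C : some other coordinate is nonzero
        obtain ⟨l, hli, hcl⟩ := hC
        have hale : Finsupp.single i s + Finsupp.single l 1 ≤ c + Finsupp.single i 1 := by
          rw [Finsupp.le_def]
          intro t
          simp only [Finsupp.add_apply, Finsupp.single_apply]
          by_cases h2 : i = t <;> by_cases h3 : l = t <;> simp_all <;> omega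
        have hab : (Finsupp.single i s + Finsupp.single l 1)
            + (c + Finsupp.single i 1 - (Finsupp.single i s + Finsupp.single l 1))
            = c + Finsupp.single i 1 := add_tsub_cancel_of_le hale
        have hdeq : (s + 1)
            + degSum (c + Finsupp.single i 1 - (Finsupp.single i s + Finsupp.single l 1))
            = degSum c + 1 := by
          have h5 := congrArg degSum hab
          simp only [degSum_add, degSum_single] at h5
          omega
        refine key_same hab (by rw [degSum_add, degSum_single, degSum_single]) (by omega) ?_
        simp only [Finsupp.tsub_apply, Finsupp.add_apply]
        simp only [Finsupp.single_apply, if_pos rfl, if_true, if_neg hli]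
        omega
      · -- case D : c is a pure power of X i
        push_neg at hC
        have hc : c = Finsupp.single i (2*s+1) := by
          ext t
          rw [Finsupp.single_apply]
          by_cases h2 : i = t
          · subst h2; simpa using hB
          · rw [if_neg h2]
            exact hC t (fun h => h2 h.symm)
        rw [hc]
        exact key_pure hs hij

lemma mkDerivation_eq_equiv (f : Fin n → R) :
    mkDerivation k f = mkDerivationEquiv k (σ := Fin n) (A := R) f := rfl

lemma single_p_mem {s : ℕ} (hn : 1 < n) (hs : 1 ≤ s) (i : Fin n) {p : R}
    (hp : p ∈ (mIdeal k n) ^ (2*s + 1)) :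
    mkDerivation k (Pi.single i p) ∈ brkS (k := k) (n := n) s := by
  have hsupp := support_degSum_of_mem_pow hp
  have h2 : mkDerivation k (Pi.single i p) = ∑ v ∈ p.support, (coeff v p) • Dv v i := by
    conv_lhs => rw [← support_sum_monomial_coeff p]
    have h1 : (Pi.single i (∑ v ∈ p.support, monomial v (coeff v p)) : Fin n → R)
        = ∑ v ∈ p.support, Pi.single i (monomial v (coeff v p)) :=
      map_sum (LinearMap.single k (fun _ : Fin n => R) i) _ _
    rw [h1, mkDerivation_eq_equiv, map_sum]
    refine Finset.sum_congr rfl (fun v hv => ?_)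
    rw [Dv, mkDerivation_eq_equiv, ← map_smul]
    congr 1
    rw [← Pi.single_smul, smul_monomial, smul_eq_mul, mul_one]
  rw [h2]
  exact Submodule.sum_mem _
    (fun v hv => Submodule.smul_mem _ _ (monomial_Dv_mem hn hs (hsupp v hv)))

lemma mL_le_brkS (hn : 1 < n) {s : ℕ} (hs : 1 ≤ s) :
    mL k n (2*s) ≤ brkS (k := k) (n := n) s := by
  intro D hD
  have hrep : D = mkDerivation k (fun j => D (X j)) :=
    (derivation_ext (fun i => by rw [mkDerivation_X])).symm
  have hsum : (fun j => (D (X j) : R)) = ∑ i : Fin n, Pi.single i (D (X i)) :=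
    (Finset.univ_sum_single _).symm
  rw [hrep, hsum, mkDerivation_eq_equiv, map_sum]
  exact Submodule.sum_mem _ (fun i _ => single_p_mem hn hs i (hD i))


variable (k n)

/-- For `n > 1` and `s ≥ 1`, the span of all brackets `[𝔪^s ℒ₊, 𝔪^s ℒ₊]`
equals `𝔪^(2s) ℒ₊`. -/
theorem stmt8 (hn : 1 < n) (s : ℕ) (hs : 1 ≤ s) :
    Submodule.span k
        {z : Derivation k (MvPolynomial (Fin n) k) (MvPolynomial (Fin n) k) |
          ∃ D ∈ mL k n s, ∃ E ∈ mL k n s, z = ⁅D, E⁆}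
      = mL k n (2 * s) := by
  show brkS (k := k) (n := n) s = mL k n (2 * s)
  exact le_antisymm (brkS_le_mL s) (mL_le_brkS hn hs)
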